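/- Let S be a finite set of real numbers that is linearly independent over ℚ, and let S = S_1 ∪ ⋯ ∪ S_Q be a partition of S into Q sets. Then there exists a real number r such that for every q ∈ {1,…,Q} and every s ∈ S_q, the fractional part of r·s lies in the open interval ((q−1)/Q, q/Q). -/

import Mathlib

open Real Filter Finset

private lemma cos_away {x ε : ℝ} (hε : 0 < ε) (h : ∀ m : ℤ, ε ≤ |x - m|)
    (h2 : |x - round x| ≤ 1/2) :
    Real.cos (2*π*x) ≤ Real.cos (2*π*ε) := by
  have h1 : ε ≤ |x - round x| := h (round x)
  have hpi := Real.pi_pos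
  have e1 : Real.cos (2*π*x) = Real.cos (2*π*(x - round x)) := by
    have : 2*π*x = 2*π*(x - round x) + (round x) * (2*π) := by ring
    rw [this, Real.cos_add_int_mul_two_pi]
  rw [e1, ← Real.cos_abs (2*π*(x - round x))]
  have e2 : |2*π*(x - round x)| = 2*π*|x - round x| := by
    rw [abs_mul, abs_of_nonneg (by positivity)]
  rw [e2]
  exact Real.cos_le_cos_of_nonneg_of_le_pi (by positivity) (by nlinarith) (by nlinarith)

private lemma factor_expand (θ : ℝ) (N : ℕ) :
    (((2 * Real.cos θ : ℝ) : ℂ)) ^ (2*N) =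
      ∑ k ∈ Finset.range (2*N+1), ((2*N).choose k : ℂ) *
        Complex.exp ((2*((k:ℝ)-N)*θ : ℝ) * Complex.I) := by
  have h2c : ((2 * Real.cos θ : ℝ) : ℂ)
      = Complex.exp (θ * Complex.I) + Complex.exp (-θ * Complex.I) := by
    push_cast
    rw [Complex.cos]
    ring
  rw [h2c, add_pow]
  apply Finset.sum_congr rfl
  intro k hk
  rw [Finset.mem_range] at hk
  rw [← Complex.exp_nat_mul, ← Complex.exp_nat_mul, ← Complex.exp_add]
  have : (k:ℂ) * (θ * Complex.I) + ((2*N - k : ℕ) : ℂ) * (-θ * Complex.I)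
      = ((2*((k:ℝ)-N)*θ : ℝ) * Complex.I) := by
    have : ((2*N - k : ℕ) : ℂ) = 2*(N:ℂ) - k := by
      push_cast [Nat.cast_sub (Nat.lt_succ_iff.mp hk)]; ring
    rw [this]; push_cast; ring
  rw [this]; ring

theorem kron {ι : Type*} [Fintype ι] (s : ι → ℝ)
    (hs : LinearIndependent ℚ s) (t : ι → ℝ) (ε : ℝ) (hε : 0 < ε) (hε2 : ε ≤ 1/2) :
    ∃ r : ℝ, ∀ i, ∃ m : ℤ, |r * s i - t i - m| < ε := by
  classical
  by_contra hcon
  push_neg at hcon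
  -- hcon : ∀ r, ∃ i, ∀ m, ε ≤ |r * s i - t i - m|
  have hne : Nonempty ι := ⟨(hcon 0).choose⟩
  set n := Fintype.card ι with hn_def
  have hn : 1 ≤ n := Fintype.card_pos
  obtain ⟨n', hn'⟩ : ∃ n', n = n' + 1 := ⟨n - 1, (Nat.succ_pred_eq_of_pos hn).symm⟩
  have hpi := Real.pi_pos
  set c : ℝ := (1 + Real.cos (2*π*ε))/2 with hc_def
  have hc0 : 0 ≤ c := by
    have := Real.neg_one_le_cos (2*π*ε); simp only [hc_def]; linarith
  have hc1 : c < 1 := by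
    have hlt : Real.cos (2*π*ε) < 1 := by
      have h1 : Real.cos (2*π*ε) < Real.cos 0 :=
        Real.cos_lt_cos_of_nonneg_of_le_pi le_rfl (by nlinarith) (by positivity)
      simpa using h1
    simp only [hc_def]; linarith
  -- choose N
  obtain ⟨N, hN1, hN⟩ : ∃ N : ℕ, 1 ≤ N ∧ ((2*N+1 : ℝ))^n * c^N < 1 := by
    have h3 : Filter.Tendsto (fun N : ℕ => (3:ℝ)^n * ((N:ℝ)^n * c^N)) atTop (nhds 0) := by
      simpa using (tendsto_pow_const_mul_const_pow_of_lt_one n hc0 hc1).const_mul ((3:ℝ)^n)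
    have h4 : ∀ᶠ N : ℕ in atTop, (3:ℝ)^n * ((N:ℝ)^n * c^N) < 1 :=
      h3.eventually_lt_const one_pos
    obtain ⟨N, hN2, hN1⟩ := (h4.and (Filter.eventually_ge_atTop 1)).exists
    refine ⟨N, hN1, lt_of_le_of_lt ?_ hN2⟩
    have hb : ((2*N+1 : ℝ)) ≤ 3*N := by
      have : (1:ℝ) ≤ N := by exact_mod_cast hN1
      linarith
    calc ((2*N+1 : ℝ))^n * c^N ≤ (3*(N:ℝ))^n * c^N := by
          gcongr
      _ = (3:ℝ)^n * ((N:ℝ)^n * c^N) := by rw [mul_pow]; ring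
  -- definitions
  set θ : ι → ℝ → ℝ := fun i r => π * (r * s i - t i) with hθ_def
  set P : ℝ → ℝ := fun r => ∏ i, (2 * Real.cos (θ i r))^(2*N) with hP_def
  set D : ℝ := (c * 4^n)^N with hD_def
  have hPc : Continuous P := by
    apply continuous_finset_prod
    intro i _
    fun_prop
  have hsqnn : ∀ r, (0:ℝ) ≤ ∏ i, (2 * Real.cos (θ i r))^2 := fun r =>
    Finset.prod_nonneg fun i _ => sq_nonneg _
  have hPsq : ∀ r, P r = (∏ i, (2 * Real.cos (θ i r))^2)^N := by
    intro r
    rw [hP_def, ← Finset.prod_pow]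
    exact Finset.prod_congr rfl fun i _ => by rw [← pow_mul]
  have hPnonneg : ∀ r, 0 ≤ P r := fun r => by
    rw [hPsq r]; exact pow_nonneg (hsqnn r) N
  -- pointwise bound
  have hPbound : ∀ r, P r ≤ D := by
    intro r
    obtain ⟨i₀, hi₀⟩ := hcon r
    have key : ∏ i, (2 * Real.cos (θ i r))^2 ≤ c * 4^n := by
      rw [← Finset.mul_prod_erase univ _ (Finset.mem_univ i₀)]
      have h1 : (2 * Real.cos (θ i₀ r))^2 ≤ 4 * c := by
        have e : (2 * Real.cos (θ i₀ r))^2 = 2 + 2 * Real.cos (2 * θ i₀ r) := by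
          rw [mul_pow, Real.cos_sq]; ring
        have hcos : Real.cos (2 * θ i₀ r) ≤ Real.cos (2*π*ε) := by
          have e2 : 2 * θ i₀ r = 2*π*(r * s i₀ - t i₀) := by
            simp only [hθ_def]; ring
          rw [e2]
          exact cos_away hε (fun m => hi₀ m) (abs_sub_round _)
        rw [e]; simp only [hc_def]; linarith
      have h2 : ∏ i ∈ univ.erase i₀, (2 * Real.cos (θ i r))^2 ≤ 4^n' := by
        calc ∏ i ∈ univ.erase i₀, (2 * Real.cos (θ i r))^2
            ≤ ∏ _i ∈ univ.erase i₀, (4:ℝ) := by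
              apply Finset.prod_le_prod (fun i _ => sq_nonneg _)
              intro i _
              have hb := Real.neg_one_le_cos (θ i r)
              have hb2 := Real.cos_le_one (θ i r)
              nlinarith
          _ = 4^n' := by
              rw [Finset.prod_const, Finset.card_erase_of_mem (Finset.mem_univ i₀)]
              congr 1
              rw [Finset.card_univ, ← hn_def, hn']
              omega
      calc (2 * Real.cos (θ i₀ r))^2 * ∏ i ∈ univ.erase i₀, (2 * Real.cos (θ i r))^2
          ≤ (4*c) * 4^n' := by
            apply mul_le_mul h1 h2 (Finset.prod_nonneg fun i _ => sq_nonneg _) (by positivity)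
        _ = c * 4^n := by rw [hn']; ring
    rw [hPsq r, hD_def]
    exact pow_le_pow_left₀ (hsqnn r) key N
  -- complex expansion
  set κ₀ : ι → ℕ := fun _ => N with hκ₀_def
  set Kset : Finset (ι → ℕ) := Fintype.piFinset (fun _ : ι => Finset.range (2*N+1)) with hK_def
  set a : (ι → ℕ) → ℝ := fun κ => 2*π*∑ i, (((κ i : ℝ) - N) * s i) with ha_def
  set b : (ι → ℕ) → ℝ := fun κ => -(2*π*∑ i, (((κ i : ℝ) - N) * t i)) with hb_def
  set coef : (ι → ℕ) → ℂ :=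
    fun κ => (∏ i, ((2*N).choose (κ i) : ℂ)) * Complex.exp (b κ * Complex.I) with hcoef_def
  have hκ₀K : κ₀ ∈ Kset := by
    simp only [hK_def, Fintype.mem_piFinset, hκ₀_def, Finset.mem_range]
    intro i; omega
  have ha0 : a κ₀ = 0 := by simp [ha_def, hκ₀_def]
  have hb0 : b κ₀ = 0 := by simp [hb_def, hκ₀_def]
  have hcoef0 : coef κ₀ = ((2*N).choose N : ℂ)^n := by
    simp [hcoef_def, hb0, hb_def, hκ₀_def, Finset.prod_const, hn_def]
  have haneq : ∀ κ ∈ Kset.erase κ₀, a κ ≠ 0 := by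
    intro κ hκ h0
    have h2π : (2*π) ≠ 0 := by positivity
    have hsum : ∑ i, (((κ i:ℝ) - N) * s i) = 0 := by
      simp only [ha_def] at h0
      rcases mul_eq_zero.mp h0 with h | h
      · exact absurd h h2π
      · exact h
    set q : ι → ℚ := fun i => (κ i : ℚ) - N with hq_def
    have hq : ∑ i, q i • s i = 0 := by
      rw [← hsum]
      apply Finset.sum_congr rfl
      intro i _
      simp only [hq_def, Rat.smul_def]
      push_cast
      ring
    have hz := Fintype.linearIndependent_iff.mp hs q hq
    have : κ = κ₀ := by
      funext i
      have hi := hz i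
      simp only [hq_def, sub_eq_zero] at hi
      exact_mod_cast hi
    exact (Finset.ne_of_mem_erase hκ) this
  have hexp : ∀ r : ℝ, ((P r : ℝ) : ℂ)
      = ∑ κ ∈ Kset, coef κ * Complex.exp ((a κ * Complex.I) * r) := by
    intro r
    have h1 : ((P r : ℝ) : ℂ) = ∏ i, (((2 * Real.cos (θ i r) : ℝ) : ℂ)) ^ (2*N) := by
      rw [hP_def]
      push_cast
      rfl
    rw [h1]
    have h2 : ∀ i ∈ univ, (((2 * Real.cos (θ i r) : ℝ) : ℂ)) ^ (2*N)
        = ∑ k ∈ Finset.range (2*N+1), ((2*N).choose k : ℂ) *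
            Complex.exp ((2*((k:ℝ)-N)*θ i r : ℝ) * Complex.I) :=
      fun i _ => factor_expand _ _
    rw [Finset.prod_congr rfl h2, Finset.prod_univ_sum]
    apply Finset.sum_congr rfl
    intro κ _
    rw [Finset.prod_mul_distrib]
    have hsum : ∑ i, 2*((κ i:ℝ)-N)*θ i r = b κ + a κ * r := by
      simp only [hθ_def, ha_def, hb_def]
      rw [Finset.mul_sum, Finset.mul_sum, ← Finset.sum_neg_distrib]
      rw [Finset.sum_mul]
      rw [← Finset.sum_add_distrib]
      apply Finset.sum_congr rfl
      intro i _
      ring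
    have h3 : ∏ i, Complex.exp ((2*((κ i:ℝ)-N)*θ i r : ℝ) * Complex.I)
        = Complex.exp (b κ * Complex.I) * Complex.exp ((a κ * Complex.I) * r) := by
      rw [← Complex.exp_sum, ← Complex.exp_add]
      congr 1
      rw [← Finset.sum_mul, ← Complex.ofReal_sum, hsum]
      push_cast
      ring
    rw [h3, hcoef_def]
    ring
  -- integral bound
  set C₀ : ℝ := ((2*N).choose N : ℝ)^n with hC₀_def
  set W : ℝ := ∑ κ ∈ Kset.erase κ₀, ((∏ i, ((2*N).choose (κ i) : ℝ)) * (2/|a κ|)) with hW_def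
  have hW0 : 0 ≤ W := by
    apply Finset.sum_nonneg
    intro κ _
    apply mul_nonneg (Finset.prod_nonneg fun i _ => by positivity) (by positivity)
  have hintbound : ∀ T : ℝ, |(∫ r in (0:ℝ)..T, P r) - C₀ * T| ≤ W := by
    intro T
    have hcont : ∀ κ : ι → ℕ, Continuous fun r : ℝ => Complex.exp ((a κ * Complex.I) * r) := by
      intro κ; fun_prop
    have hcast : ((∫ r in (0:ℝ)..T, P r : ℝ) : ℂ)
        = ∑ κ ∈ Kset, coef κ * ∫ r in (0:ℝ)..T, Complex.exp ((a κ * Complex.I) * r) := by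
      rw [← intervalIntegral.integral_ofReal]
      rw [intervalIntegral.integral_congr (g := fun r => ∑ κ ∈ Kset,
        coef κ * Complex.exp ((a κ * Complex.I) * r)) (fun r _ => hexp r)]
      rw [intervalIntegral.integral_finset_sum]
      · exact Finset.sum_congr rfl fun κ _ => intervalIntegral.integral_const_mul _ _
      · intro κ _
        exact (continuous_const.mul (hcont κ)).intervalIntegrable _ _
    have hcenter : coef κ₀ * (∫ r in (0:ℝ)..T, Complex.exp ((a κ₀ * Complex.I) * r))
        = (C₀ : ℂ) * T := by
      rw [ha0, hcoef0]
      simp [hC₀_def]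
    have hsplit : ((∫ r in (0:ℝ)..T, P r : ℝ) : ℂ) - (C₀:ℂ) * T
        = ∑ κ ∈ Kset.erase κ₀,
            coef κ * ∫ r in (0:ℝ)..T, Complex.exp ((a κ * Complex.I) * r) := by
      rw [hcast, ← Finset.add_sum_erase _ _ hκ₀K, hcenter]
      ring
    have hterm : ∀ κ ∈ Kset.erase κ₀,
        ‖coef κ * ∫ r in (0:ℝ)..T, Complex.exp ((a κ * Complex.I) * r)‖
          ≤ (∏ i, ((2*N).choose (κ i) : ℝ)) * (2/|a κ|) := by
      intro κ hκ
      have hA : a κ ≠ 0 := haneq κ hκ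
      have hAI : (a κ : ℂ) * Complex.I ≠ 0 := by
        simp [Complex.ofReal_ne_zero, hA, Complex.I_ne_zero]
      have hint : (∫ r in (0:ℝ)..T, Complex.exp ((a κ * Complex.I) * r))
          = (Complex.exp ((a κ * Complex.I) * T) - 1) / (a κ * Complex.I) := by
        rw [integral_exp_mul_complex hAI]
        norm_num
      rw [hint, norm_mul]
      have hcoefn : ‖coef κ‖ = ∏ i, ((2*N).choose (κ i) : ℝ) := by
        rw [hcoef_def]
        simp only [norm_mul, Complex.norm_exp_ofReal_mul_I, mul_one]
        rw [← Nat.cast_prod, ← Complex.ofReal_natCast, Complex.norm_real,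
          Real.norm_eq_abs, abs_of_nonneg (by positivity), Nat.cast_prod]
      have h2' : ‖(Complex.exp ((a κ : ℂ) * Complex.I * T) - 1) / ((a κ : ℂ) * Complex.I)‖
          ≤ 2/|a κ| := by
        rw [norm_div]
        have hnum : ‖Complex.exp ((a κ:ℂ) * Complex.I * (T:ℂ)) - 1‖ ≤ 2 := by
          calc ‖Complex.exp ((a κ:ℂ) * Complex.I * (T:ℂ)) - 1‖
              ≤ ‖Complex.exp ((a κ:ℂ) * Complex.I * (T:ℂ))‖ + ‖(1:ℂ)‖ := norm_sub_le _ _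
            _ = 2 := by
                rw [show ((a κ:ℂ) * Complex.I * (T:ℂ)) = ((a κ * T : ℝ):ℂ) * Complex.I by
                  push_cast; ring, Complex.norm_exp_ofReal_mul_I]
                norm_num
        have hden : ‖(a κ:ℂ) * Complex.I‖ = |a κ| := by
          rw [norm_mul, Complex.norm_I, mul_one, Complex.norm_real, Real.norm_eq_abs]
        rw [hden]
        gcongr
      rw [hcoefn]
      exact mul_le_mul_of_nonneg_left h2' (Finset.prod_nonneg fun i _ => by positivity)
    have habs : ∀ x : ℝ, |x| = ‖((x:ℝ):ℂ)‖ := fun x => by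
      rw [Complex.norm_real, Real.norm_eq_abs]
    rw [habs]
    have hcast2 : (((∫ r in (0:ℝ)..T, P r) - C₀ * T : ℝ) : ℂ)
        = ((∫ r in (0:ℝ)..T, P r : ℝ) : ℂ) - (C₀:ℂ) * T := by push_cast; ring
    rw [hcast2, hsplit, hW_def]
    exact (norm_sum_le _ _).trans (Finset.sum_le_sum hterm)
  -- comparing C₀ and D
  have hCB : (4:ℝ)^N ≤ (2*N+1) * ((2*N).choose N : ℝ) := by
    exact_mod_cast Nat.four_pow_le_two_mul_add_one_mul_central_binom N
  have hp1 : (0:ℝ) < (2*(N:ℝ)+1)^n := by positivity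
  have hDC : D < C₀ := by
    have e1 : D = c^N * ((4:ℝ)^N)^n := by
      rw [hD_def, mul_pow, ← pow_mul, ← pow_mul, Nat.mul_comm]
    have h4 : (0:ℝ) < ((4:ℝ)^N)^n := by positivity
    have e2 : c^N * ((4:ℝ)^N)^n < ((4:ℝ)^N)^n / (2*(N:ℝ)+1)^n := by
      rw [lt_div_iff₀ hp1]
      calc c^N * ((4:ℝ)^N)^n * (2*(N:ℝ)+1)^n
          = ((4:ℝ)^N)^n * ((2*(N:ℝ)+1)^n * c^N) := by ring
        _ < ((4:ℝ)^N)^n * 1 := mul_lt_mul_of_pos_left hN h4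
        _ = ((4:ℝ)^N)^n := mul_one _
    have e3 : ((4:ℝ)^N)^n / (2*(N:ℝ)+1)^n ≤ C₀ := by
      rw [← div_pow, hC₀_def]
      apply pow_le_pow_left₀ (by positivity)
      rw [div_le_iff₀ (by positivity)]
      linarith [hCB]
    calc D = c^N * ((4:ℝ)^N)^n := e1
      _ < ((4:ℝ)^N)^n / (2*(N:ℝ)+1)^n := e2
      _ ≤ C₀ := e3
  set T : ℝ := (W+1)/(C₀ - D) with hT_def
  have hT0 : 0 < T := by
    apply div_pos (by linarith) (by linarith)
  have h5 : (∫ r in (0:ℝ)..T, P r) ≤ D * T := by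
    have hmono := intervalIntegral.integral_mono_on (μ := MeasureTheory.volume) hT0.le
      (hPc.intervalIntegrable _ _) (intervalIntegrable_const (c := D))
      (fun x _ => hPbound x)
    simpa [intervalIntegral.integral_const, smul_eq_mul, mul_comm] using hmono
  have h6 := abs_le.mp (hintbound T)
  have h8 : (C₀ - D) * T = W + 1 := by
    rw [hT_def, mul_div_assoc', mul_comm, mul_div_assoc]
    rw [div_self (by linarith : C₀ - D ≠ 0), mul_one]
  nlinarith [h6.1, h6.2, h5, h8]

theorem stmt7 (S : Set ℝ) (hS : S.Finite)
    (hind : LinearIndependent ℚ (fun s : S => (s : ℝ)))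
    (Q : ℕ) (hQ : 0 < Q) (part : Fin Q → Set ℝ)
    (hcover : ⋃ q, part q = S)
    (hdisj : Pairwise (Function.onFun Disjoint part)) :
    ∃ r : ℝ, ∀ q : Fin Q, ∀ s ∈ part q,
      Int.fract (r * s) ∈ Set.Ioo ((q : ℝ) / Q) (((q : ℕ) + 1 : ℝ) / Q) := by
  haveI : Fintype S := hS.fintype
  have hq : ∀ x : S, ∃ q : Fin Q, (x:ℝ) ∈ part q := by
    intro x
    have hx : (x:ℝ) ∈ ⋃ q, part q := hcover.symm ▸ x.2
    simpa [Set.mem_iUnion] using hx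
  choose qf hqf using hq
  have hQ1 : (1:ℝ) ≤ Q := by exact_mod_cast hQ
  have hQ' : (0:ℝ) < Q := by linarith
  obtain ⟨r, hr⟩ := kron (fun x : S => (x:ℝ)) hind
    (fun x => (((qf x : ℕ) : ℝ) + 1/2)/Q) (1/(4*Q)) (by positivity)
    (by rw [div_le_div_iff₀ (by positivity) (by norm_num)]; linarith)
  refine ⟨r, ?_⟩
  intro q s hs
  have hsS : s ∈ S := by rw [← hcover]; exact Set.mem_iUnion.2 ⟨q, hs⟩
  set x : S := ⟨s, hsS⟩ with hx_def
  have hqx : qf x = q := by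
    by_contra hne
    exact Set.disjoint_left.mp (hdisj hne) (hqf x) hs
  obtain ⟨m, hm⟩ := hr x
  rw [hqx] at hm
  have hm' := abs_lt.mp hm
  set y : ℝ := r * s - m with hy_def
  have e1 : (((q : ℕ) : ℝ) + 1/2)/Q = ((q:ℕ):ℝ)/Q + 1/(2*Q) := by
    field_simp
  have e2 : (((q : ℕ) : ℝ) + 1)/Q = ((q:ℕ):ℝ)/Q + 1/Q := by
    field_simp
  have e3 : 1/(2*(Q:ℝ)) = 2*(1/(4*Q)) := by
    field_simp
    ring
  have e4 : 1/(Q:ℝ) = 4*(1/(4*Q)) := by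
    field_simp
  have hqnn : (0:ℝ) ≤ ((q:ℕ):ℝ)/Q := by positivity
  have hq1 : (((q:ℕ):ℝ) + 1)/Q ≤ 1 := by
    rw [div_le_one hQ']
    have : (q:ℕ) + 1 ≤ Q := q.isLt
    exact_mod_cast this
  have hε : (0:ℝ) < 1/(4*Q) := by positivity
  have hlow : ((q:ℕ):ℝ)/Q < y := by
    have := hm'.1
    simp only [hy_def] at *
    linarith [e1, e3]
  have hhigh : y < (((q:ℕ):ℝ) + 1)/Q := by
    have := hm'.2
    simp only [hy_def] at *
    linarith [e1, e2, e3, e4]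
  have hfr : Int.fract (r * s) = y := by
    rw [hy_def, ← Int.fract_sub_intCast (r * s) m]
    exact Int.fract_eq_self.mpr ⟨by linarith, by linarith⟩
  rw [hfr]
  exact ⟨hlow, hhigh⟩
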